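/- arXiv:1105.5517 — 2 statements merged into one kernel-verified Lean document; each statement's English description precedes it below -/
import Mathlib

section
/- Let α be an element of F_{q^r} of degree r over F_q with monic minimal polynomial h(x) = x^r + c_{r−1}x^{r−1} + ... + c_0. Suppose there exists 0 < k ≤ r with gcd(k,p) = 1 and c_{r−k} ≠ 0, and let k be minimal with this property. Then the power sum of the conjugates satisfies Σ_{i=1}^r α_i^k = −k·c_{r−k} ≠ 0, and Σ_{i=1}^r α_i^j = 0 for all 0 < j < k, where α_1, ..., α_r are the conjugates of α over F_q. -/
open Polynomial IntermediateField

/-- An element of `K` fixed by `x ↦ x^|F|` lies in the image of `F`. -/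
lemma fixed_mem_range {F K : Type*} [Field F] [Field K] [Fintype F] [Algebra F K]
    (x : K) (hx : x ^ Fintype.card F = x) : x ∈ Set.range (algebraMap F K) := by
  classical
  set q := Fintype.card F with hq
  have hq2 : 1 < q := Fintype.one_lt_card
  set f : K[X] := X ^ q - X with hf
  have hdegf : f.natDegree = q := by
    rw [hf, Polynomial.natDegree_sub_eq_left_of_natDegree_lt] <;>
      simp [Polynomial.natDegree_X_pow] <;> omega
  have hf0 : f ≠ 0 := by
    intro h0
    rw [h0, Polynomial.natDegree_zero] at hdegf; omega
  have hroot : ∀ y : K, y ^ q = y → y ∈ f.roots.toFinset := by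
    intro y hy
    rw [Multiset.mem_toFinset, Polynomial.mem_roots hf0]
    simp [hf, Polynomial.IsRoot, hy]
  by_contra hxr
  set T : Finset K := Finset.image (algebraMap F K) Finset.univ with hT
  have hxT : x ∉ T := by
    intro hmem
    rw [hT, Finset.mem_image] at hmem
    obtain ⟨a, -, ha⟩ := hmem
    exact hxr ⟨a, ha⟩
  have hTcard : T.card = q := by
    rw [hT, Finset.card_image_of_injective _ (algebraMap F K).injective, Finset.card_univ]
  have hsub : insert x T ⊆ f.roots.toFinset := by
    intro y hy
    rcases Finset.mem_insert.mp hy with rfl | hy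
    · exact hroot y hx
    · rw [hT, Finset.mem_image] at hy
      obtain ⟨a, -, rfl⟩ := hy
      refine hroot _ ?_
      rw [← map_pow, FiniteField.pow_card]
  have h1 : (insert x T).card = q + 1 := by rw [Finset.card_insert_of_notMem hxT, hTcard]
  have h2 : (insert x T).card ≤ q := by
    calc (insert x T).card ≤ f.roots.toFinset.card := Finset.card_le_card hsub
      _ ≤ Multiset.card f.roots := Multiset.toFinset_card_le _
      _ ≤ f.natDegree := Polynomial.card_roots' f
      _ = q := hdegf
  omega

/-- Let `α` be of degree `r` over `F_q` with monic minimal polynomial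
`h = x^r + c_{r-1}x^{r-1} + ... + c_0`, and let `k` be minimal with `0 < k ≤ r`,
`gcd(k,p) = 1` and `c_{r-k} ≠ 0`. Then the `k`-th power sum of the conjugates
`α, α^q, ..., α^{q^{r-1}}` equals `-k·c_{r-k} ≠ 0`, and the `j`-th power sums vanish
for `0 < j < k`. -/
theorem power_sums_of_conjugates (p n q r : ℕ) [Fact p.Prime] (hq : q = p ^ n)
    (F K : Type*) [Field F] [Field K] [Fintype F] [Algebra F K]
    (hF : Fintype.card F = q) (α : K) (hdeg : (minpoly F α).natDegree = r)
    (k : ℕ) (hk0 : 0 < k) (hkr : k ≤ r) (hkp : Nat.Coprime k p)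
    (hc : (minpoly F α).coeff (r - k) ≠ 0)
    (hmin : ∀ j, 0 < j → j < k → Nat.Coprime j p → (minpoly F α).coeff (r - j) = 0) :
    (∑ i ∈ Finset.range r, (α ^ q ^ i) ^ k =
      -(k : K) * algebraMap F K ((minpoly F α).coeff (r - k))) ∧
    -(k : K) * algebraMap F K ((minpoly F α).coeff (r - k)) ≠ 0 ∧
    (∀ j, 0 < j → j < k → ∑ i ∈ Finset.range r, (α ^ q ^ i) ^ j = 0) := by
  classical
  have hp : p.Prime := Fact.out
  have hr : 0 < r := lt_of_lt_of_le hk0 hkr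
  have hq2 : 1 < q := hF ▸ Fintype.one_lt_card
  have hn0 : n ≠ 0 := by rintro rfl; simp [hq] at hq2
  -- characteristic
  haveI hcharF : CharP F p := by
    obtain ⟨m, hpm, hcard⟩ := FiniteField.card F (ringChar F)
    have hdvd : p ∣ ringChar F := by
      refine hp.dvd_of_dvd_pow (n := (m : ℕ)) ?_
      rw [← hcard, hF, hq]
      exact dvd_pow_self p hn0
    have : p = ringChar F := ((Nat.prime_dvd_prime_iff_eq hp hpm).mp hdvd)
    rw [this]
    exact ringChar.charP F
  haveI hcharK : CharP K p := charP_of_injective_algebraMap (algebraMap F K).injective p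
  -- α is integral
  have hint : IsIntegral F α := by
    by_contra hni
    rw [minpoly.eq_zero hni, Polynomial.natDegree_zero] at hdeg
    omega
  -- α ^ q ^ r = α
  have halpha : α ^ q ^ r = α := by
    haveI := IntermediateField.adjoin.finiteDimensional hint
    haveI : Finite ↥F⟮α⟯ := Module.finite_of_finite F
    haveI : Fintype ↥F⟮α⟯ := Fintype.ofFinite _
    have hcardE : Fintype.card ↥F⟮α⟯ = q ^ r := by
      rw [Module.card_eq_pow_finrank (K := F) (V := ↥F⟮α⟯), hF,
        IntermediateField.adjoin.finrank hint, hdeg]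
    have hgen : (IntermediateField.AdjoinSimple.gen F α) ^ q ^ r =
        IntermediateField.AdjoinSimple.gen F α := by
      conv_lhs => rw [← hcardE]
      exact FiniteField.pow_card _
    have := congrArg (algebraMap ↥F⟮α⟯ K) hgen
    simpa [map_pow, IntermediateField.AdjoinSimple.algebraMap_gen] using this
  -- the conjugates
  set u : ℕ → K := fun i => α ^ q ^ i with hu
  set g : K[X] := ∏ i ∈ Finset.range r, (X - C (u i)) with hg
  -- Frobenius
  set Φ : K →+* K := (frobenius K p) ^ n with hΦdef
  have hΦ : ∀ x : K, Φ x = x ^ q := by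
    intro x
    rw [hΦdef, RingHom.coe_pow, iterate_frobenius, hq]
  have hshift : ∀ i, Φ (u i) = u (i + 1) := by
    intro i
    rw [hΦ, hu]
    simp only [← pow_mul, ← pow_succ]
  have hmapg : g.map Φ = g := by
    rw [hg, Polynomial.map_prod]
    simp only [Polynomial.map_sub, Polynomial.map_X, Polynomial.map_C, hshift]
    obtain ⟨m, rfl⟩ : ∃ m, r = m + 1 := ⟨r - 1, by omega⟩
    rw [Finset.prod_range_succ, Finset.prod_range_succ']
    congr 1
    rw [show u (m + 1) = u 0 by simp [hu, halpha]]
  have hgmonic : g.Monic := by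
    apply Polynomial.monic_prod_of_monic
    intro i _
    exact Polynomial.monic_X_sub_C _
  have hgdeg : g.natDegree = r := by
    rw [hg, Polynomial.natDegree_prod_of_monic _ _ (fun i _ => Polynomial.monic_X_sub_C _)]
    simp
  -- lift g to F[X]
  have hlift : g ∈ Polynomial.lifts (algebraMap F K) := by
    rw [Polynomial.lifts_iff_coeff_lifts]
    intro j
    apply fixed_mem_range
    have := congrArg (fun P => P.coeff j) hmapg
    simp only [Polynomial.coeff_map] at this
    rw [hΦ] at this
    rw [hF]
    exact this
  obtain ⟨g₀, hg₀map, hg₀deg, hg₀monic⟩ :=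
    Polynomial.lifts_and_degree_eq_and_monic hlift hgmonic
  -- minpoly = g₀
  have hg₀root : Polynomial.aeval α g₀ = 0 := by
    rw [Polynomial.aeval_def, ← Polynomial.eval_map, hg₀map, hg, Polynomial.eval_prod]
    apply Finset.prod_eq_zero (Finset.mem_range.mpr hr)
    simp [hu]
  have hg₀deg' : g₀.natDegree = r := by
    have := congrArg Polynomial.natDegree hg₀map
    rwa [Polynomial.natDegree_map_eq_of_injective (algebraMap F K).injective, hgdeg] at this
  have heq : g₀ = minpoly F α :=
    Polynomial.eq_of_monic_of_dvd_of_natDegree_le (minpoly.monic hint) hg₀monic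
      (minpoly.dvd F α hg₀root) (by rw [hg₀deg', hdeg])
  have hhg : (minpoly F α).map (algebraMap F K) = g := by rw [← heq, hg₀map]
  -- multiset of conjugates
  set s : Multiset K := Multiset.map (fun i : Fin r => u i) Finset.univ.val with hs
  have hcards : Multiset.card s = r := by simp [hs]
  -- coefficient relation
  have hcoeffrel : ∀ j, j ≤ r →
      algebraMap F K ((minpoly F α).coeff (r - j)) = (-1) ^ j * s.esymm j := by
    intro j hj
    have h1 := congrArg (fun P => P.coeff (r - j)) hhg
    simp only [Polynomial.coeff_map] at h1
    rw [h1]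
    have hgs : g = (Multiset.map (fun t => X - C t) s).prod := by
      rw [hg, ← Fin.prod_univ_eq_prod_range (fun i => X - C (u i)) r,
        Finset.prod_eq_multiset_prod, hs, Multiset.map_map]
      rfl
    rw [hgs, Multiset.prod_X_sub_C_coeff s (by omega)]
    rw [hcards, show r - (r - j) = j by omega]
  -- power sums
  set P : ℕ → K := fun m => ∑ i ∈ Finset.range r, u i ^ m with hP
  -- Newton's identities
  have hnewton : ∀ m, 0 < m → P m = (-1) ^ (m + 1) * m * s.esymm m -
      ∑ a ∈ Finset.filter (fun a => a.1 ∈ Set.Ioo 0 m) (Finset.HasAntidiagonal.antidiagonal m),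
        (-1) ^ a.1 * s.esymm a.1 * P a.2 := by
    intro m hm
    have haevalp : ∀ m' : ℕ, (MvPolynomial.aeval (fun i : Fin r => u i))
        (MvPolynomial.psum (Fin r) K m') = P m' := by
      intro m'
      rw [MvPolynomial.psum, map_sum]
      simp only [map_pow, MvPolynomial.aeval_X]
      rw [hP, Fin.sum_univ_eq_sum_range (fun i => u i ^ m') r]
    have haevale : ∀ m' : ℕ, (MvPolynomial.aeval (fun i : Fin r => u i))
        (MvPolynomial.esymm (Fin r) K m') = s.esymm m' := by
      intro m'
      rw [MvPolynomial.aeval_esymm_eq_multiset_esymm, hs]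
    have hmv := congrArg (MvPolynomial.aeval (fun i : Fin r => u i))
      (MvPolynomial.psum_eq_mul_esymm_sub_sum (Fin r) K m hm)
    simp only [map_sub, map_mul, map_sum, map_pow, map_natCast, map_neg, map_one,
      haevalp, haevale] at hmv
    exact hmv
  -- vanishing of small power sums
  have hvanish : ∀ j, 0 < j → j < k → P j = 0 := by
    intro j
    induction j using Nat.strong_induction_on with
    | _ j ih =>
      intro hj0 hjk
      rw [hnewton j hj0]
      rw [Finset.sum_eq_zero, sub_zero]
      · by_cases hjp : Nat.Coprime j p
        · have he : s.esymm j = 0 := by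
            have h1 := hcoeffrel j (le_of_lt (lt_of_lt_of_le hjk hkr))
            rw [hmin j hj0 hjk hjp, map_zero] at h1
            rcases mul_eq_zero.mp h1.symm with h2 | h2
            · exact absurd h2 (pow_ne_zero _ (by norm_num))
            · exact h2
          rw [he, mul_zero]
        · have hpj : p ∣ j := by
            rwa [Nat.coprime_comm, hp.coprime_iff_not_dvd, not_not] at hjp
          have : (j : K) = 0 := (CharP.cast_eq_zero_iff K p j).mpr hpj
          rw [this, mul_zero, zero_mul]
      · intro a ha
        simp only [Finset.mem_filter, Finset.HasAntidiagonal.mem_antidiagonal, Set.mem_Ioo] at ha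
        rw [ih a.2 (by omega) (by omega) (by omega), mul_zero]
  -- main value
  have hmain : P k = -(k : K) * algebraMap F K ((minpoly F α).coeff (r - k)) := by
    rw [hnewton k hk0]
    rw [Finset.sum_eq_zero, sub_zero]
    · rw [hcoeffrel k hkr]
      ring
    · intro a ha
      simp only [Finset.mem_filter, Finset.HasAntidiagonal.mem_antidiagonal, Set.mem_Ioo] at ha
      rw [hvanish a.2 (by omega) (by omega), mul_zero]
  refine ⟨hmain, ?_, fun j hj0 hjk => hvanish j hj0 hjk⟩
  intro h0
  rcases mul_eq_zero.mp h0 with h1 | h1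
  · rw [neg_eq_zero, CharP.cast_eq_zero_iff K p] at h1
    have : ¬ p ∣ k := by rwa [Nat.coprime_comm, hp.coprime_iff_not_dvd] at hkp
    exact this h1
  · exact hc ((map_eq_zero_iff _ (algebraMap F K).injective).mp h1)
end

section
/- Let q be a power of an odd prime p, r < d natural numbers with gcd(d,p) = 1, ψ a nontrivial additive character of F_p, and let F_d denote the set of f = Σ a_i x^i ∈ F_q[x] of degree d with a_d ≠ 0 and a_i = 0 whenever p | i. For α, β nonzero elements of F_{q^r}, F_{q^s} respectively (r, s > 0, r + s < d) with distinct monic minimal polynomials g ≠ h over F_q, such that p·deg(g) ∤ r and p·deg(h) ∤ s, the average over f ∈ F_d of ψ(Tr_{F_{q^r}/F_p} f(α) − Tr_{F_{q^s}/F_p} f(β)) equals 0. -/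
open Finset Polynomial

lemma aux_vdm {Ω : Type*} [Field Ω] (T : Finset Ω) (h0 : (0:Ω) ∉ T) (c : Ω → Ω)
    (h : ∀ m : ℕ, 1 ≤ m → m ≤ T.card → ∑ z ∈ T, c z * z ^ m = 0) :
    ∀ z ∈ T, c z = 0 := by
  classical
  set N := T.card with hN
  let e : T ≃ Fin N := T.equivFin
  let x : Fin N → Ω := fun i => (e.symm i : Ω)
  have hxinj : Function.Injective x := fun i j hij => by
    have := Subtype.val_injective hij
    exact e.symm.injective this
  have hx0 : ∀ i, x i ≠ 0 := fun i hi => h0 (hi ▸ (e.symm i).2)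
  have hre : ∀ m : ℕ, ∑ i : Fin N, c (x i) * x i ^ m = ∑ z ∈ T, c z * z ^ m := by
    intro m
    rw [← Finset.sum_coe_sort T (fun z => c z * z ^ m)]
    exact Equiv.sum_comp e.symm (fun a : T => c (a : Ω) * (a : Ω) ^ m)
  let v : Fin N → Ω := fun i => c (x i) * x i
  have hv : v = 0 := by
    apply Matrix.eq_zero_of_mulVec_eq_zero (M := (Matrix.vandermonde x).transpose)
    · rw [Matrix.det_transpose]
      exact Matrix.det_vandermonde_ne_zero_iff.mpr hxinj
    · funext j
      have : ∑ i : Fin N, c (x i) * x i ^ ((j : ℕ) + 1) = 0 := by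
        rw [hre]
        exact h _ (Nat.succ_le_succ (Nat.zero_le _)) (Nat.succ_le_of_lt j.2)
      simpa [Matrix.mulVec, Matrix.transpose, Matrix.vandermonde, dotProduct, v,
        pow_succ, mul_comm, mul_assoc, mul_left_comm] using this
  intro z hz
  have hi : c (x (e ⟨z, hz⟩)) * x (e ⟨z, hz⟩) = 0 := congrFun hv (e ⟨z, hz⟩)
  have hxz : x (e ⟨z, hz⟩) = z := by simp [x]
  rw [hxz] at hi
  exact (mul_eq_zero.mp hi).resolve_right (fun hzz => h0 (hzz ▸ hz))

/-- Let `p > 2`, `q = p^n`, `gcd(d,p)=1`, and let `F_d` be the set of degree-`d`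
polynomials over `F_q` whose coefficients vanish at all indices divisible by `p`.
For nonzero `α ∈ F_{q^r}`, `β ∈ F_{q^s}` (`r+s < d`) with distinct minimal polynomials
over `F_q` such that `p·deg(minpoly α) ∤ r` and `p·deg(minpoly β) ∤ s`, the average over
`f ∈ F_d` of `ψ(Tr_{F_{q^r}/F_p} f(α) - Tr_{F_{q^s}/F_p} f(β))` vanishes. -/
theorem average_two_point_character_sum_eq_zero (p n q r s d : ℕ) [Fact p.Prime]
    (hp : 2 < p) (hq : q = p ^ n) (hdp : Nat.Coprime d p)
    (hr : 0 < r) (hs : 0 < s) (hrsd : r + s < d)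
    (F K₁ K₂ : Type*) [Field F] [Field K₁] [Field K₂] [Fintype F] [Fintype K₁] [Fintype K₂]
    [Algebra F K₁] [Algebra F K₂] [Algebra (ZMod p) K₁] [Algebra (ZMod p) K₂]
    (hF : Fintype.card F = q) (hK₁ : Fintype.card K₁ = q ^ r) (hK₂ : Fintype.card K₂ = q ^ s)
    (α : K₁) (β : K₂) (hα : α ≠ 0) (hβ : β ≠ 0)
    (hgh : minpoly F α ≠ minpoly F β)
    (hga : ¬(p * (minpoly F α).natDegree ∣ r))
    (hgb : ¬(p * (minpoly F β).natDegree ∣ s))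
    (ψ : AddChar (ZMod p) ℂ) (hψ : ψ ≠ 1)
    (S : Finset (Polynomial F))
    (hS : ∀ f : Polynomial F, f ∈ S ↔
      f.natDegree = d ∧ f ≠ 0 ∧ ∀ i, p ∣ i → f.coeff i = 0) :
    ∑ f ∈ S, ψ (Algebra.trace (ZMod p) K₁ (Polynomial.aeval α f) -
        Algebra.trace (ZMod p) K₂ (Polynomial.aeval β f)) = 0 := by
  classical
  have hd0 : 0 < d := by omega
  by_cases H : ∃ m : ℕ, 0 < m ∧ m < d ∧ ¬ p ∣ m ∧ ∃ c : F,
      Algebra.trace (ZMod p) K₁ (algebraMap F K₁ c * α ^ m) ≠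
        Algebra.trace (ZMod p) K₂ (algebraMap F K₂ c * β ^ m)
  · obtain ⟨m, hm0, hmd, hpm, c, hc⟩ := H
    set w : ZMod p := Algebra.trace (ZMod p) K₁ (algebraMap F K₁ c * α ^ m) -
        Algebra.trace (ZMod p) K₂ (algebraMap F K₂ c * β ^ m) with hwdef
    have hw : w ≠ 0 := sub_ne_zero.mpr hc
    have hψw : ψ w ≠ 1 := by
      intro h1
      apply hψ
      ext x
      have hx : x = (x * w⁻¹).val • w := by
        rw [nsmul_eq_mul, ZMod.natCast_val, ZMod.cast_id]
        field_simp
      rw [AddChar.one_apply, hx, AddChar.map_nsmul_eq_pow, h1, one_pow]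
    -- membership preservation
    have hmemS : ∀ (c' : F), ∀ f ∈ S, f + Polynomial.C c' * Polynomial.X ^ m ∈ S := by
      intro c' f hf
      rw [hS] at hf ⊢
      obtain ⟨hdeg, hne, hco⟩ := hf
      have hdu' : (Polynomial.C c' * Polynomial.X ^ m).natDegree < f.natDegree := by
        rw [hdeg]
        exact lt_of_le_of_lt (le_trans (Polynomial.natDegree_mul_le) (by simp)) hmd
      have hdeg2 : (f + Polynomial.C c' * Polynomial.X ^ m).natDegree = d := by
        rw [Polynomial.natDegree_add_eq_left_of_natDegree_lt hdu', hdeg]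
      refine ⟨hdeg2, ?_, ?_⟩
      · intro h0
        rw [h0, Polynomial.natDegree_zero] at hdeg2
        omega
      · intro i hpi
        have him : i ≠ m := fun h => hpm (h ▸ hpi)
        simp [Polynomial.coeff_add, hco i hpi, Polynomial.coeff_C_mul,
          Polynomial.coeff_X_pow, him]
    -- trace shift identity
    have hshift : ∀ f : Polynomial F,
        Algebra.trace (ZMod p) K₁ (Polynomial.aeval α (f + Polynomial.C c * Polynomial.X ^ m)) -
          Algebra.trace (ZMod p) K₂ (Polynomial.aeval β (f + Polynomial.C c * Polynomial.X ^ m)) =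
        (Algebra.trace (ZMod p) K₁ (Polynomial.aeval α f) -
          Algebra.trace (ZMod p) K₂ (Polynomial.aeval β f)) + w := by
      intro f
      have h1 : Polynomial.aeval α (f + Polynomial.C c * Polynomial.X ^ m)
          = Polynomial.aeval α f + algebraMap F K₁ c * α ^ m := by
        rw [map_add]; congr 1; simp
      have h2 : Polynomial.aeval β (f + Polynomial.C c * Polynomial.X ^ m)
          = Polynomial.aeval β f + algebraMap F K₂ c * β ^ m := by
        rw [map_add]; congr 1; simp
      rw [h1, h2, map_add, map_add, hwdef]
      ring
    have hbij : ∑ f ∈ S, ψ (Algebra.trace (ZMod p) K₁ (Polynomial.aeval α f) -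
          Algebra.trace (ZMod p) K₂ (Polynomial.aeval β f)) =
        ∑ f ∈ S, ψ (Algebra.trace (ZMod p) K₁
            (Polynomial.aeval α (f + Polynomial.C c * Polynomial.X ^ m)) -
          Algebra.trace (ZMod p) K₂
            (Polynomial.aeval β (f + Polynomial.C c * Polynomial.X ^ m))) := by
      refine (Finset.sum_nbij' (i := fun f => f + Polynomial.C c * Polynomial.X ^ m)
        (j := fun f => f - Polynomial.C c * Polynomial.X ^ m) ?_ ?_ ?_ ?_ ?_).symm
      · intro a ha; exact hmemS c a ha
      · intro a ha
        have h' : a - Polynomial.C c * Polynomial.X ^ m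
            = a + Polynomial.C (-c) * Polynomial.X ^ m := by
          rw [map_neg]; ring
        show a - Polynomial.C c * Polynomial.X ^ m ∈ S
        rw [h']
        exact hmemS (-c) a ha
      · intro a _; show a + _ - _ = a; ring
      · intro a _; show a - _ + _ = a; ring
      · intro a _; rfl
    have heq : (∑ f ∈ S, ψ (Algebra.trace (ZMod p) K₁ (Polynomial.aeval α f) -
          Algebra.trace (ZMod p) K₂ (Polynomial.aeval β f))) =
        (∑ f ∈ S, ψ (Algebra.trace (ZMod p) K₁ (Polynomial.aeval α f) -
          Algebra.trace (ZMod p) K₂ (Polynomial.aeval β f))) * ψ w := by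
      nth_rewrite 1 [hbij]
      rw [Finset.sum_mul]
      refine Finset.sum_congr rfl fun f _ => ?_
      rw [hshift f, AddChar.map_add_eq_mul]
    have h2 : (∑ f ∈ S, ψ (Algebra.trace (ZMod p) K₁ (Polynomial.aeval α f) -
          Algebra.trace (ZMod p) K₂ (Polynomial.aeval β f))) * (1 - ψ w) = 0 := by
      rw [mul_sub, mul_one, ← heq, sub_self]
    rcases mul_eq_zero.mp h2 with h | h
    · exact h
    · exact absurd (sub_eq_zero.mp h).symm hψw
  · exfalso
    push_neg at H
    have hp' : p.Prime := Fact.out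
    have hq1 : 1 < q := hF ▸ Fintype.one_lt_card
    have hn : 0 < n := by
      by_contra h0
      rw [Nat.eq_zero_of_not_pos h0, pow_zero] at hq
      omega
    -- characteristic of F is p
    have hcharF : CharP F p := by
      obtain ⟨k, hℓ, hcard⟩ := FiniteField.card F (ringChar F)
      have : ringChar F = p := by
        have h1 : p ∣ ringChar F ^ (k : ℕ) := by
          rw [← hcard, hF, hq]
          exact dvd_pow_self p hn.ne'
        exact ((Nat.prime_dvd_prime_iff_eq hp' hℓ).mp (hp'.dvd_of_dvd_pow h1)).symm
      exact this ▸ ringChar.charP F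
    letI : Algebra (ZMod p) F := ZMod.algebra F p
    haveI t1 : IsScalarTower (ZMod p) F K₁ :=
      IsScalarTower.of_algebraMap_eq' (RingHom.ext_zmod _ _)
    haveI t2 : IsScalarTower (ZMod p) F K₂ :=
      IsScalarTower.of_algebraMap_eq' (RingHom.ext_zmod _ _)
    -- finrank facts
    have hfr1 : Module.finrank F K₁ = r := by
      have hcf := Module.card_eq_pow_finrank (K := F) (V := K₁)
      rw [hF, hK₁] at hcf
      exact (Nat.pow_right_injective hq1 hcf.symm)
    have hfr2 : Module.finrank F K₂ = s := by
      have hcf := Module.card_eq_pow_finrank (K := F) (V := K₂)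
      rw [hF, hK₂] at hcf
      exact (Nat.pow_right_injective hq1 hcf.symm)
    -- algebraic closure
    set Ω := AlgebraicClosure F with hΩ
    haveI : CharP Ω p := inferInstance
    have cardE1 : Fintype.card (K₁ →ₐ[F] Ω) = r := by
      rw [AlgHom.card]; exact hfr1
    have cardE2 : Fintype.card (K₂ →ₐ[F] Ω) = s := by
      rw [AlgHom.card]; exact hfr2
    -- reduce the trace identity to F-traces
    have key0 : ∀ m : ℕ, 0 < m → m < d → ¬ p ∣ m →
        Algebra.trace F K₁ (α ^ m) = Algebra.trace F K₂ (β ^ m) := by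
      intro m h0 h1 h2
      have hnd := traceForm_nondegenerate (ZMod p) F
      refine sub_eq_zero.mp (hnd.1 _ (fun c => ?_))
      have h3 := H m h0 h1 h2 c
      have e1 : (Algebra.trace F K₁ (α ^ m) - Algebra.trace F K₂ (β ^ m)) * c
          = Algebra.trace F K₁ (c • α ^ m) - Algebra.trace F K₂ (c • β ^ m) := by
        rw [map_smul, map_smul, smul_eq_mul, smul_eq_mul]; ring
      rw [Algebra.traceForm_apply, e1, map_sub, Algebra.trace_trace, Algebra.trace_trace,
        Algebra.smul_def, Algebra.smul_def, h3, sub_self]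
    -- the embedding power sums agree
    have key1 : ∀ m : ℕ, 0 < m → m ≤ r + s →
        (∑ σ : K₁ →ₐ[F] Ω, σ α ^ m) = ∑ τ : K₂ →ₐ[F] Ω, τ β ^ m := by
      intro m
      induction m using Nat.strong_induction_on with
      | _ m ih =>
        intro h0 h1
        by_cases hpm : p ∣ m
        · obtain ⟨m', rfl⟩ := hpm
          have hm'0 : 0 < m' := by
            rcases Nat.eq_zero_or_pos m' with h | h
            · subst h; simp at h0
            · exact h
          have hm'lt : m' < p * m' := (Nat.lt_mul_iff_one_lt_left hm'0).mpr (by omega)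
          have hih := ih m' hm'lt hm'0 (le_trans hm'lt.le h1)
          calc (∑ σ : K₁ →ₐ[F] Ω, σ α ^ (p * m'))
              = ∑ σ : K₁ →ₐ[F] Ω, (σ α ^ m') ^ p := by
                refine Finset.sum_congr rfl fun σ _ => ?_
                rw [← pow_mul, mul_comm]
            _ = (∑ σ : K₁ →ₐ[F] Ω, σ α ^ m') ^ p := by rw [sum_pow_char]
            _ = (∑ τ : K₂ →ₐ[F] Ω, τ β ^ m') ^ p := by rw [hih]
            _ = ∑ τ : K₂ →ₐ[F] Ω, (τ β ^ m') ^ p := by rw [sum_pow_char]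
            _ = ∑ τ : K₂ →ₐ[F] Ω, τ β ^ (p * m') := by
                refine Finset.sum_congr rfl fun τ _ => ?_
                rw [← pow_mul, mul_comm]
        · have h2 := congrArg (algebraMap F Ω) (key0 m h0 (by omega) hpm)
          rw [trace_eq_sum_embeddings, trace_eq_sum_embeddings] at h2
          simpa [map_pow] using h2
    -- grouping into fibers
    classical
    let e1 : (K₁ →ₐ[F] Ω) → Ω := fun σ => σ α
    let e2 : (K₂ →ₐ[F] Ω) → Ω := fun τ => τ β
    let T : Finset Ω := (Finset.univ.image e1) ∪ (Finset.univ.image e2)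
    let cf : Ω → Ω := fun z => ((Finset.univ.filter (fun σ => e1 σ = z)).card : Ω)
        - ((Finset.univ.filter (fun τ => e2 τ = z)).card : Ω)
    have hTcard : T.card ≤ r + s := by
      refine le_trans (Finset.card_union_le _ _) (add_le_add ?_ ?_)
      · exact le_trans (Finset.card_image_le) (by rw [Finset.card_univ, cardE1])
      · exact le_trans (Finset.card_image_le) (by rw [Finset.card_univ, cardE2])
    have h0T : (0:Ω) ∉ T := by
      intro h
      rcases Finset.mem_union.mp h with h | h
      · obtain ⟨σ, _, hσ⟩ := Finset.mem_image.mp h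
        exact hα (σ.toRingHom.injective (by rw [map_zero]; exact hσ))
      · obtain ⟨τ, _, hτ⟩ := Finset.mem_image.mp h
        exact hβ (τ.toRingHom.injective (by rw [map_zero]; exact hτ))
    have hgroup1 : ∀ m : ℕ,
        ∑ z ∈ T, ((Finset.univ.filter (fun σ => e1 σ = z)).card : Ω) * z ^ m
          = ∑ σ : K₁ →ₐ[F] Ω, σ α ^ m := by
      intro m
      have h1 : ∑ σ : K₁ →ₐ[F] Ω, ((e1 σ) ^ m)
          = ∑ z ∈ Finset.univ.image e1,
              (Finset.univ.filter (fun σ => e1 σ = z)).card • (z ^ m) :=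
        Finset.sum_comp (fun z => z ^ m) e1
      have h2 : ∑ z ∈ Finset.univ.image e1,
          ((Finset.univ.filter (fun σ => e1 σ = z)).card : Ω) * z ^ m
          = ∑ σ : K₁ →ₐ[F] Ω, σ α ^ m := by
        refine Eq.trans ?_ h1.symm
        exact Finset.sum_congr rfl fun z _ => (nsmul_eq_mul _ _).symm
      refine Eq.trans ?_ h2
      refine (Finset.sum_subset Finset.subset_union_left ?_).symm
      intro z _ hz
      have hemp : Finset.univ.filter (fun σ => e1 σ = z) = ∅ :=
        Finset.filter_eq_empty_iff.mpr fun {σ} _ hσ =>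
          hz (hσ ▸ Finset.mem_image_of_mem e1 (Finset.mem_univ σ))
      simp [hemp]
    have hgroup2 : ∀ m : ℕ,
        ∑ z ∈ T, ((Finset.univ.filter (fun τ => e2 τ = z)).card : Ω) * z ^ m
          = ∑ τ : K₂ →ₐ[F] Ω, τ β ^ m := by
      intro m
      have h1 : ∑ τ : K₂ →ₐ[F] Ω, ((e2 τ) ^ m)
          = ∑ z ∈ Finset.univ.image e2,
              (Finset.univ.filter (fun τ => e2 τ = z)).card • (z ^ m) :=
        Finset.sum_comp (fun z => z ^ m) e2
      have h2 : ∑ z ∈ Finset.univ.image e2,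
          ((Finset.univ.filter (fun τ => e2 τ = z)).card : Ω) * z ^ m
          = ∑ τ : K₂ →ₐ[F] Ω, τ β ^ m := by
        refine Eq.trans ?_ h1.symm
        exact Finset.sum_congr rfl fun z _ => (nsmul_eq_mul _ _).symm
      refine Eq.trans ?_ h2
      refine (Finset.sum_subset Finset.subset_union_right ?_).symm
      intro z _ hz
      have hemp : Finset.univ.filter (fun τ => e2 τ = z) = ∅ :=
        Finset.filter_eq_empty_iff.mpr fun {τ} _ hτ =>
          hz (hτ ▸ Finset.mem_image_of_mem e2 (Finset.mem_univ τ))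
      simp [hemp]
    have hgroup : ∀ m : ℕ, 1 ≤ m → m ≤ T.card → ∑ z ∈ T, cf z * z ^ m = 0 := by
      intro m h0 h1
      have : ∑ z ∈ T, cf z * z ^ m
          = (∑ z ∈ T, ((Finset.univ.filter (fun σ => e1 σ = z)).card : Ω) * z ^ m)
            - ∑ z ∈ T, ((Finset.univ.filter (fun τ => e2 τ = z)).card : Ω) * z ^ m := by
        rw [← Finset.sum_sub_distrib]
        exact Finset.sum_congr rfl fun z _ => by rw [sub_mul]
      rw [this, hgroup1, hgroup2, key1 m h0 (le_trans h1 hTcard), sub_self]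
    have hvdm := aux_vdm T h0T cf hgroup
    -- root facts
    have hint : IsIntegral F α := Algebra.IsIntegral.isIntegral α
    have hintβ : IsIntegral F β := Algebra.IsIntegral.isIntegral β
    have hroot1 : ∀ σ : K₁ →ₐ[F] Ω, aeval (σ α) (minpoly F α) = 0 := fun σ => by
      rw [Polynomial.aeval_algHom_apply, minpoly.aeval, map_zero]
    have hroot2 : ∀ τ : K₂ →ₐ[F] Ω, aeval (τ β) (minpoly F β) = 0 := fun τ => by
      rw [Polynomial.aeval_algHom_apply, minpoly.aeval, map_zero]
    have hminz1 : ∀ σ : K₁ →ₐ[F] Ω, minpoly F (σ α) = minpoly F α := fun σ => by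
      have h := minpoly.eq_of_irreducible_of_monic (minpoly.irreducible hint) (hroot1 σ)
        (minpoly.monic hint)
      exact h.symm
    have hminz2 : ∀ τ : K₂ →ₐ[F] Ω, minpoly F (τ β) = minpoly F β := fun τ => by
      have h := minpoly.eq_of_irreducible_of_monic (minpoly.irreducible hintβ) (hroot2 τ)
        (minpoly.monic hintβ)
      exact h.symm
    have hne1 : Nonempty (K₁ →ₐ[F] Ω) := Fintype.card_pos_iff.mp (by rw [cardE1]; exact hr)
    obtain ⟨σ₀⟩ := hne1
    have hΩint : ∀ t : Ω, IsIntegral F t ∧ ((minpoly F t).map (algebraMap F Ω)).Splits := fun t =>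
      ⟨(Algebra.IsAlgebraic.isAlgebraic t).isIntegral, IsAlgClosed.splits _⟩
    -- fiber uniformity
    have huni : ∀ σ σ' : (K₁ →ₐ[F] Ω),
        (Finset.univ.filter (fun τ => e1 τ = e1 σ)).card =
          (Finset.univ.filter (fun τ => e1 τ = e1 σ')).card := by
      intro σ σ'
      have hz' : aeval (σ' α) (minpoly F (σ α)) = 0 := by rw [hminz1 σ]; exact hroot1 σ'
      obtain ⟨θ₀, hθ₀⟩ := IntermediateField.exists_algHom_of_splits_of_aeval hΩint hz'
      have hbij := Algebra.IsAlgebraic.algHom_bijective θ₀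
      set θ : Ω ≃ₐ[F] Ω := AlgEquiv.ofBijective θ₀ hbij with hθdef
      have hθap : ∀ t : Ω, θ t = θ₀ t := fun t => rfl
      refine Finset.card_bij' (fun τ _ => θ.toAlgHom.comp τ) (fun τ _ => θ.symm.toAlgHom.comp τ)
        ?_ ?_ ?_ ?_
      · intro τ hτ
        rw [Finset.mem_filter] at hτ ⊢
        refine ⟨Finset.mem_univ _, ?_⟩
        show θ (τ α) = σ' α
        rw [show e1 τ = τ α from rfl] at hτ
        rw [hτ.2, hθap, hθ₀]
      · intro τ hτ
        rw [Finset.mem_filter] at hτ ⊢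
        refine ⟨Finset.mem_univ _, ?_⟩
        show θ.symm (τ α) = σ α
        rw [show e1 τ = τ α from rfl] at hτ
        rw [hτ.2, AlgEquiv.symm_apply_eq, hθap, hθ₀]
      · intro τ _
        ext t
        exact θ.symm_apply_apply (τ t)
      · intro τ _
        ext t
        exact θ.apply_symm_apply (τ t)
    -- image is the set of roots
    have himg : (Finset.univ.image e1) = ((minpoly F α).aroots Ω).toFinset := by
      refine Finset.Subset.antisymm ?_ ?_
      · intro z hz
        obtain ⟨σ, _, rfl⟩ := Finset.mem_image.mp hz
        rw [Multiset.mem_toFinset, Polynomial.mem_aroots]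
        exact ⟨minpoly.ne_zero hint, hroot1 σ⟩
      · intro z hz
        rw [Multiset.mem_toFinset, Polynomial.mem_aroots] at hz
        have hK₁int : ∀ t : K₁, IsIntegral F t ∧ ((minpoly F t).map (algebraMap F Ω)).Splits := fun t =>
          ⟨Algebra.IsIntegral.isIntegral t, IsAlgClosed.splits _⟩
        obtain ⟨φ, hφ⟩ := IntermediateField.exists_algHom_of_splits_of_aeval hK₁int hz.2
        exact Finset.mem_image.mpr ⟨φ, Finset.mem_univ _, hφ⟩
    have hcardimg : (Finset.univ.image e1).card = (minpoly F α).natDegree := by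
      rw [himg]
      have hsep : (minpoly F α).Separable := Algebra.IsSeparable.isSeparable F α
      rw [Multiset.toFinset_card_of_nodup (Polynomial.nodup_roots (hsep.map))]
      exact ((IsAlgClosed.splits ((minpoly F α).map (algebraMap F Ω))).natDegree_eq_card_roots.symm.trans
        (Polynomial.natDegree_map _))
    -- counting embeddings fiberwise
    have hkey : (minpoly F α).natDegree * (Finset.univ.filter (fun τ => e1 τ = e1 σ₀)).card
        = r := by
      have hcount : (Finset.univ : Finset (K₁ →ₐ[F] Ω)).card
          = ∑ z ∈ Finset.univ.image e1, (Finset.univ.filter (fun τ => e1 τ = z)).card :=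
        Finset.card_eq_sum_card_image e1 Finset.univ
      rw [Finset.card_univ, cardE1] at hcount
      have hconst : ∑ z ∈ Finset.univ.image e1, (Finset.univ.filter (fun τ => e1 τ = z)).card
          = ∑ _z ∈ Finset.univ.image e1,
              (Finset.univ.filter (fun τ => e1 τ = e1 σ₀)).card := by
        refine Finset.sum_congr rfl fun z hz => ?_
        obtain ⟨σ, _, rfl⟩ := Finset.mem_image.mp hz
        exact huni σ σ₀
      rw [hconst, Finset.sum_const, smul_eq_mul, hcardimg] at hcount
      exact hcount.symm
    -- the β-fiber over σ₀ α is empty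
    have hfib2 : (Finset.univ.filter (fun τ => e2 τ = e1 σ₀)) = ∅ := by
      refine Finset.filter_eq_empty_iff.mpr fun {τ} _ hτ => ?_
      apply hgh
      calc minpoly F α = minpoly F (σ₀ α) := (hminz1 σ₀).symm
        _ = minpoly F (τ β) := by rw [show e2 τ = τ β from rfl] at hτ; rw [hτ]
        _ = minpoly F β := hminz2 τ
    -- conclude
    have hz₀T : e1 σ₀ ∈ T :=
      Finset.mem_union_left _ (Finset.mem_image_of_mem e1 (Finset.mem_univ σ₀))
    have hc0 : ((Finset.univ.filter (fun τ => e1 τ = e1 σ₀)).card : Ω) = 0 := by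
      have h := hvdm (e1 σ₀) hz₀T
      simpa [cf, hfib2] using h
    obtain ⟨k', hk'⟩ := (CharP.cast_eq_zero_iff Ω p _).mp hc0
    exact hga ⟨k', by rw [← hkey, hk']; ring⟩
end
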